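/- arXiv:2111.09629 — 7 statements merged into one kernel-verified Lean document; each statement's English description precedes it below -/
import Mathlib

section
/- For every real u ≥ 0 and every complex number z ≠ 0 with Im z ≥ 0, the kernel k(u,z) := (sin(uz)/z)·e^{iuz} satisfies |k(u,z)| ≤ min(u, 1/|z|). -/
/-- If `Re s ≤ 0` then `|e^s - 1| ≤ |s|`. -/
lemma abs_exp_sub_one_le_of_re_nonpos (s : ℂ) (hs : s.re ≤ 0) :
    ‖Complex.exp s - 1‖ ≤ ‖s‖ := by
  have hderiv : ∀ t : ℝ, HasDerivAt (fun t : ℝ => Complex.exp ((t : ℂ) * s))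
      (s * Complex.exp ((t : ℂ) * s)) t := by
    intro t
    have h1 : HasDerivAt (fun t : ℝ => (t : ℂ) * s) s t := by
      simpa using (Complex.ofRealCLM.hasDerivAt (x := t)).mul_const s
    simpa [mul_comm] using h1.cexp
  have hint : Complex.exp s - 1 = ∫ t in (0:ℝ)..1, s * Complex.exp ((t : ℂ) * s) := by
    have h := intervalIntegral.integral_eq_sub_of_hasDerivAt
      (a := (0:ℝ)) (b := 1)
      (f := fun t : ℝ => Complex.exp ((t : ℂ) * s))
      (f' := fun t : ℝ => s * Complex.exp ((t : ℂ) * s))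
      (fun t _ => hderiv t)
      (by apply Continuous.intervalIntegrable; fun_prop)
    norm_num at h
    rw [← h, intervalIntegral.integral_const_mul]
  rw [hint]
  have := intervalIntegral.norm_integral_le_of_norm_le_const
    (a := (0:ℝ)) (b := 1) (C := ‖s‖)
    (f := fun t : ℝ => s * Complex.exp ((t : ℂ) * s)) ?_
  · simpa using this
  · intro x hx
    rw [Set.uIoc_of_le (by norm_num)] at hx
    have hx0 : 0 ≤ x := le_of_lt hx.1
    have : ‖Complex.exp ((x : ℂ) * s)‖ ≤ 1 := by
      rw [Complex.norm_exp]
      apply Real.exp_le_one_iff.mpr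
      simp only [Complex.mul_re, Complex.ofReal_re, Complex.ofReal_im, zero_mul, sub_zero]
      exact mul_nonpos_of_nonneg_of_nonpos hx0 hs
    calc ‖s * Complex.exp ((x : ℂ) * s)‖
        = ‖s‖ * ‖Complex.exp ((x : ℂ) * s)‖ := by
          simp [norm_mul]
      _ ≤ ‖s‖ * 1 := by
          exact mul_le_mul_of_nonneg_left this (norm_nonneg s)
      _ = ‖s‖ := mul_one _

/-- For every real `u ≥ 0` and every complex `z ≠ 0` with `Im z ≥ 0`, the kernel
`k(u,z) = (sin(uz)/z)·e^{iuz}` satisfies `|k(u,z)| ≤ min(u, 1/|z|)`. -/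
theorem kernel_bound (u : ℝ) (hu : 0 ≤ u) (z : ℂ) (hz : z ≠ 0) (hzim : 0 ≤ z.im) :
    ‖Complex.sin (u * z) / z * Complex.exp (Complex.I * u * z)‖
      ≤ min u (1 / ‖z‖) := by
  set s : ℂ := 2 * ((u : ℂ) * z) * Complex.I with hs_def
  have hsre : s.re ≤ 0 := by
    have : s.re = -(2 * u * z.im) := by
      simp [hs_def, Complex.mul_re, Complex.mul_im]
      ring
    rw [this]
    nlinarith [hzim, hu]
  -- key identity: sin(uz) * exp(I u z) = (1 - exp s) * I / 2
  have ha : Complex.exp ((u : ℂ) * z * Complex.I) ≠ 0 := Complex.exp_ne_zero _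
  have hid : Complex.sin ((u : ℂ) * z) * Complex.exp (Complex.I * (u : ℂ) * z)
      = (1 - Complex.exp s) * Complex.I / 2 := by
    rw [Complex.sin, show -((u:ℂ)*z) * Complex.I = -((u:ℂ)*z*Complex.I) by ring,
      Complex.exp_neg]
    have h2 : Complex.exp s = Complex.exp ((u : ℂ) * z * Complex.I) ^ 2 := by
      rw [← Complex.exp_nat_mul]
      congr 1
      push_cast
      ring
    have h3 : Complex.exp (Complex.I * (u : ℂ) * z) = Complex.exp ((u : ℂ) * z * Complex.I) := by
      ring_nf
    rw [h2, h3]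
    field_simp
  have habs : ‖Complex.exp s - 1‖ ≤ min (2 * (u * ‖z‖)) 2 := by
    apply le_min
    · have := abs_exp_sub_one_le_of_re_nonpos s hsre
      calc ‖Complex.exp s - 1‖ ≤ ‖s‖ := this
        _ = 2 * (u * ‖z‖) := by
            simp [hs_def, norm_mul, Complex.norm_real, abs_of_nonneg hu]
    · have h1 : ‖Complex.exp s‖ ≤ 1 := by
        rw [Complex.norm_exp]; exact Real.exp_le_one_iff.mpr hsre
      calc ‖Complex.exp s - 1‖
          ≤ ‖Complex.exp s‖ + ‖(1:ℂ)‖ := by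
            simpa using norm_sub_le (Complex.exp s) 1
        _ ≤ 1 + 1 := by simp [h1]
        _ = 2 := by norm_num
  have hzabs : 0 < ‖z‖ := norm_pos_iff.mpr hz
  have hexpr : ‖Complex.sin (u * z) / z * Complex.exp (Complex.I * u * z)‖
      = ‖Complex.exp s - 1‖ / (2 * ‖z‖) := by
    rw [div_mul_eq_mul_div, norm_div, hid]
    rw [norm_div, norm_mul]
    simp only [Complex.norm_I, mul_one, Complex.norm_two]
    rw [← norm_neg (1 - Complex.exp s)]
    ring_nf
  rw [hexpr]
  apply le_min
  · calc ‖Complex.exp s - 1‖ / (2 * ‖z‖)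
        ≤ (2 * (u * ‖z‖)) / (2 * ‖z‖) := by
          apply div_le_div_of_nonneg_right ?_ (by positivity)
          exact le_trans (habs.trans (min_le_left _ _)) le_rfl
      _ = u := by field_simp
  · calc ‖Complex.exp s - 1‖ / (2 * ‖z‖)
        ≤ 2 / (2 * ‖z‖) := by
          apply div_le_div_of_nonneg_right ?_ (by positivity)
          exact habs.trans (min_le_right _ _)
      _ = 1 / ‖z‖ := by field_simp
end

section
/- Let a : (0,∞) → (0,∞) be monotone increasing and such that â(x) := x/a(x) is also monotone increasing on (0,∞). Let q : [0,∞) → ℂ be integrable with ‖q‖_a := ∫₀^∞ a(t)|q(t)| dt < ∞, and let z ∈ ℂ with Im z ≥ 0 and z ≠ 0. Set k(u,z) := (sin(uz)/z)·e^{iuz}, g(x) := ∫ₓ^∞ k(t−x,z) q(t) dt, and ω(x) := â(1/|z|)·∫ₓ^∞ a(t)|q(t)| dt. Then there exists a bounded continuous function f : [0,∞) → ℂ satisfying the integral equation f(x) = g(x) + ∫ₓ^∞ k(t−x,z) q(t) f(t) dt for all x ≥ 0, and this solution obeys the bound |f(x)| ≤ exp(ω(x)) − 1 for all x ≥ 0.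 -/
open MeasureTheory Filter Topology
open scoped Nat

lemma jost_aux_exp_bound (w : ℂ) (hw : w.re ≤ 0) :
    ‖Complex.exp w - 1‖ ≤ ‖w‖ := by
  rw [Complex.norm_def, Complex.norm_def]
  apply Real.sqrt_le_sqrt
  rw [Complex.normSq_apply, Complex.normSq_apply]
  simp only [Complex.sub_re, Complex.sub_im, Complex.one_re, Complex.one_im,
    Complex.exp_re, Complex.exp_im]
  have h1 : Real.exp w.re ≤ 1 := by simpa using Real.exp_le_exp.mpr hw
  have h2 : 1 + w.re ≤ Real.exp w.re := by
    have := Real.add_one_le_exp w.re; linarith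
  have h3 : 1 - w.im ^ 2 / 2 ≤ Real.cos w.im := Real.one_sub_sq_div_two_le_cos
  have h4 : Real.cos w.im ≤ 1 := Real.cos_le_one _
  have h5 : 0 < Real.exp w.re := Real.exp_pos _
  have h6 : Real.sin w.im ^ 2 + Real.cos w.im ^ 2 = 1 := Real.sin_sq_add_cos_sq _
  nlinarith [sq_nonneg (Real.exp w.re - 1), sq_nonneg w.im, sq_nonneg w.re,
    mul_pos h5 h5, sq_nonneg (Real.sin w.im)]

lemma jost_aux_tsum_exp (y : ℝ) :
    ∑' n : ℕ, y ^ (n + 1) / (Nat.factorial (n + 1) : ℝ) = Real.exp y - 1 := by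
  have hs : Summable (fun n : ℕ => y ^ n / n !) := Real.summable_pow_div_factorial y
  have h0 : Real.exp y = ∑' n : ℕ, y ^ n / n ! := by
    rw [Real.exp_eq_exp_ℝ, NormedSpace.exp_eq_tsum_div]
  have h1 := Summable.tsum_eq_zero_add hs
  simp only [pow_zero, Nat.factorial_zero, Nat.cast_one, div_one] at h1
  rw [h0, h1]
  ring

noncomputable def jostPhi (w : ℝ → ℝ) (x : ℝ) : ℝ := ∫ s in Set.Ici (max x 0), w s

section jostPhi

variable {w : ℝ → ℝ} (hwm : Measurable w) (hw0 : ∀ t, 0 ≤ w t) (hwint : Integrable w)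

lemma jostPhi_anti (hw0 : ∀ t, 0 ≤ w t) (hwint : Integrable w) : Antitone (jostPhi w) := by
  intro x y hxy
  exact setIntegral_mono_set hwint.integrableOn
    (Filter.Eventually.of_forall hw0)
    (HasSubset.Subset.eventuallyLE (Set.Ici_subset_Ici.mpr (max_le_max hxy le_rfl)))

lemma jostPhi_nonneg (hw0 : ∀ t, 0 ≤ w t) (x : ℝ) : 0 ≤ jostPhi w x :=
  integral_nonneg hw0

lemma jostPhi_le (hw0 : ∀ t, 0 ≤ w t) (hwint : Integrable w) (x : ℝ) :
    jostPhi w x ≤ jostPhi w 0 := by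
  have : jostPhi w 0 = ∫ s in Set.Ici (0:ℝ), w s := by simp [jostPhi]
  rw [this]
  exact setIntegral_mono_set hwint.integrableOn (Filter.Eventually.of_forall hw0)
    (HasSubset.Subset.eventuallyLE (Set.Ici_subset_Ici.mpr (le_max_right x 0)))

lemma jostPhi_meas (hw0 : ∀ t, 0 ≤ w t) (hwint : Integrable w) :
    Measurable (jostPhi w) :=
  (jostPhi_anti hw0 hwint).measurable

lemma jostPhi_eq (x : ℝ) (hx : 0 ≤ x) : jostPhi w x = ∫ s in Set.Ici x, w s := by
  rw [jostPhi, max_eq_left hx]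

lemma jostPhi_integrable_mul_pow (hwm : Measurable w) (hw0 : ∀ t, 0 ≤ w t)
    (hwint : Integrable w) (n : ℕ) (x : ℝ) :
    IntegrableOn (fun t => w t * jostPhi w t ^ n) (Set.Ici x) := by
  apply Integrable.mono' (g := fun t => w t * jostPhi w 0 ^ n)
    (hwint.integrableOn.mul_const _)
  · exact ((hwm.mul ((jostPhi_meas hw0 hwint).pow_const n)).aestronglyMeasurable)
  · refine Filter.Eventually.of_forall fun t => ?_
    have h1 : 0 ≤ jostPhi w t := jostPhi_nonneg hw0 t
    have h2 : jostPhi w t ^ n ≤ jostPhi w 0 ^ n :=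
      pow_le_pow_left₀ h1 (jostPhi_le hw0 hwint t) n
    rw [Real.norm_eq_abs, abs_of_nonneg (mul_nonneg (hw0 t) (pow_nonneg h1 n))]
    exact mul_le_mul_of_nonneg_left h2 (hw0 t)

lemma jost_key (hwm : Measurable w) (hw0 : ∀ t, 0 ≤ w t) (hwint : Integrable w) :
    ∀ (n : ℕ) (x : ℝ), 0 ≤ x →
      ∫ t in Set.Ici x, w t * jostPhi w t ^ n = jostPhi w x ^ (n + 1) / (n + 1) := by
  intro n
  induction n with
  | zero =>
    intro x hx
    simp only [pow_zero, mul_one, pow_one, Nat.cast_zero, zero_add, div_one]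
    exact (jostPhi_eq x hx).symm
  | succ n ih =>
    intro x hx
    set Φ := jostPhi w with hΦ
    have hΦ0 : ∀ t, 0 ≤ Φ t := jostPhi_nonneg hw0
    have hΦle : ∀ t, Φ t ≤ Φ 0 := jostPhi_le hw0 hwint
    have hΦm : Measurable Φ := jostPhi_meas hw0 hwint
    -- the double-integral representation
    have hswap :
        ∫ t in Set.Ici x, (fun t => w t * Φ t ^ n) t * Φ t
          = ∫ s, ∫ t in Set.Ici x, (w t * Φ t ^ n) * (Set.Ici t).indicator w s := by
      have hint : Integrable (Function.uncurry fun t s =>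
          (w t * Φ t ^ n) * (Set.Ici t).indicator w s)
          ((volume.restrict (Set.Ici x)).prod volume) := by
        apply Integrable.mono'
          (g := fun p : ℝ × ℝ => (w p.1 * Φ 0 ^ n) * w p.2)
          (Integrable.mul_prod (hwint.restrict.mul_const _) hwint)
        · have : (Function.uncurry fun t s => (w t * Φ t ^ n) * (Set.Ici t).indicator w s)
              = fun p : ℝ × ℝ => (w p.1 * Φ p.1 ^ n) *
                  ({q : ℝ × ℝ | q.1 ≤ q.2}.indicator (fun q => w q.2) p) := by
            funext p
            rcases p with ⟨t, s⟩
            simp only [Function.uncurry, Set.indicator, Set.mem_Ici, Set.mem_setOf_eq]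
          rw [this]
          exact (((hwm.comp measurable_fst).mul
            ((hΦm.comp measurable_fst).pow_const n)).mul
            (((hwm.comp measurable_snd)).indicator
              (measurableSet_le measurable_fst measurable_snd))).aestronglyMeasurable
        · refine Filter.Eventually.of_forall fun p => ?_
          rcases p with ⟨t, s⟩
          simp only [Function.uncurry]
          rw [Real.norm_eq_abs]
          have hind : (Set.Ici t).indicator w s ≤ w s := by
            by_cases h : s ∈ Set.Ici t <;> simp [Set.indicator, h, hw0 s]
          have hind0 : 0 ≤ (Set.Ici t).indicator w s := by
            by_cases h : s ∈ Set.Ici t <;> simp [Set.indicator, h, hw0 s]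
          rw [abs_of_nonneg (mul_nonneg (mul_nonneg (hw0 t) (pow_nonneg (hΦ0 t) n)) hind0)]
          apply mul_le_mul
          · exact mul_le_mul_of_nonneg_left (pow_le_pow_left₀ (hΦ0 t) (hΦle t) n) (hw0 t)
          · exact hind
          · exact hind0
          · exact mul_nonneg (hw0 t) (pow_nonneg (hΦ0 0) n)
      have := integral_integral_swap hint
      rw [← this]
      apply setIntegral_congr_fun measurableSet_Ici
      intro t ht
      have htx : (0:ℝ) ≤ t := le_trans hx ht
      show (w t * Φ t ^ n) * Φ t = ∫ y, w t * Φ t ^ n * (Set.Ici t).indicator w y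
      rw [integral_const_mul, integral_indicator measurableSet_Ici, ← jostPhi_eq t htx]
    -- compute inner integral after swap
    have hled : ∀ s : ℝ,
        (∫ t in Set.Ici x, (w t * Φ t ^ n) * (Set.Ici t).indicator w s)
          = (∫ t in Set.Icc x s, w t * Φ t ^ n) * w s := by
      intro s
      have : ∀ t : ℝ, (w t * Φ t ^ n) * (Set.Ici t).indicator w s
          = (Set.Iic s).indicator (fun t => (w t * Φ t ^ n) * w s) t := by
        intro t
        by_cases h : t ≤ s
        · simp [Set.indicator, h, Set.mem_Ici.mpr h]
        · have : s ∉ Set.Ici t := by simpa using fun hh => h hh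
          simp [Set.indicator, h, this]
      have h1 : ∫ t in Set.Ici x, (w t * Φ t ^ n) * (Set.Ici t).indicator w s
          = ∫ t in Set.Ici x, (Set.Iic s).indicator (fun t => (w t * Φ t ^ n) * w s) t :=
        integral_congr_ae (Filter.Eventually.of_forall fun t => this t)
      rw [h1, setIntegral_indicator measurableSet_Iic, Set.Ici_inter_Iic,
        integral_mul_const]
    -- the outer function vanishes for s < x
    have houter : (∫ s, (∫ t in Set.Icc x s, w t * Φ t ^ n) * w s)
        = ∫ s in Set.Ici x, (∫ t in Set.Icc x s, w t * Φ t ^ n) * w s := by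
      refine (setIntegral_eq_integral_of_forall_compl_eq_zero fun s hs => ?_).symm
      have : Set.Icc x s = ∅ := Set.Icc_eq_empty (by simpa using hs)
      simp [this]
    -- evaluate inner integral using IH
    have hIcc : ∀ s ∈ Set.Ici x, (∫ t in Set.Icc x s, w t * Φ t ^ n) * w s
        = ((Φ x ^ (n+1) / (n+1)) - (Φ s ^ (n+1) / (n+1))) * w s := by
      intro s hs
      have hs' : x ≤ s := hs
      congr 1
      have hunion : Set.Icc x s ∪ Set.Ioi s = Set.Ici x := Set.Icc_union_Ioi_eq_Ici hs'
      have hint1 : IntegrableOn (fun t => w t * Φ t ^ n) (Set.Icc x s) :=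
        (jostPhi_integrable_mul_pow hwm hw0 hwint n x).mono_set Set.Icc_subset_Ici_self
      have hint2 : IntegrableOn (fun t => w t * Φ t ^ n) (Set.Ioi s) :=
        (jostPhi_integrable_mul_pow hwm hw0 hwint n s).mono_set Set.Ioi_subset_Ici_self
      have hdisj : Disjoint (Set.Icc x s) (Set.Ioi s) := by
        apply Set.disjoint_left.mpr
        intro t ht ht'
        exact absurd ht.2 (not_le.mpr ht')
      have := setIntegral_union hdisj measurableSet_Ioi hint1 hint2
      rw [hunion] at this
      have hx' : ∫ t in Set.Ici x, w t * Φ t ^ n = Φ x ^ (n+1) / (n+1) := ih x hx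
      have hsx : ∫ t in Set.Ioi s, w t * Φ t ^ n = Φ s ^ (n+1) / (n+1) := by
        rw [← integral_Ici_eq_integral_Ioi]
        exact ih s (le_trans hx hs')
      rw [hx', hsx] at this
      linarith
    -- put it together
    have step1 : ∫ t in Set.Ici x, w t * Φ t ^ (n+1)
        = ∫ s in Set.Ici x, ((Φ x ^ (n+1) / (n+1)) - (Φ s ^ (n+1) / (n+1))) * w s := by
      calc ∫ t in Set.Ici x, w t * Φ t ^ (n+1)
          = ∫ t in Set.Ici x, (fun t => w t * Φ t ^ n) t * Φ t := by
            apply setIntegral_congr_fun measurableSet_Ici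
            intro t _
            ring
        _ = ∫ s, (∫ t in Set.Icc x s, w t * Φ t ^ n) * w s := by
            rw [hswap]
            exact integral_congr_ae (Filter.Eventually.of_forall fun s => hled s)
        _ = ∫ s in Set.Ici x, (∫ t in Set.Icc x s, w t * Φ t ^ n) * w s := houter
        _ = ∫ s in Set.Ici x, ((Φ x ^ (n+1) / (n+1)) - (Φ s ^ (n+1) / (n+1))) * w s :=
            setIntegral_congr_fun measurableSet_Ici hIcc
    have hintw : IntegrableOn w (Set.Ici x) := hwint.integrableOn
    have hintwp : IntegrableOn (fun s => w s * Φ s ^ (n+1)) (Set.Ici x) :=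
      jostPhi_integrable_mul_pow hwm hw0 hwint (n+1) x
    have step2 : ∫ s in Set.Ici x, ((Φ x ^ (n+1) / (n+1)) - (Φ s ^ (n+1) / (n+1))) * w s
        = (Φ x ^ (n+1) / (n+1)) * Φ x
          - (1 / ((n:ℝ)+1)) * ∫ s in Set.Ici x, w s * Φ s ^ (n+1) := by
      have hrw : ∀ s : ℝ, ((Φ x ^ (n+1) / (n+1)) - (Φ s ^ (n+1) / (n+1))) * w s
          = (Φ x ^ (n+1) / (n+1)) * w s - (1 / ((n:ℝ)+1)) * (w s * Φ s ^ (n+1)) := by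
        intro s; push_cast; ring
      simp_rw [hrw]
      rw [integral_sub ((hintw.const_mul _)) (hintwp.const_mul _),
        integral_const_mul, integral_const_mul, ← jostPhi_eq x hx]
    set L := ∫ t in Set.Ici x, w t * Φ t ^ (n+1) with hL
    have hfin : L = Φ x ^ (n+1) / (n+1) * Φ x - (1/((n:ℝ)+1)) * L := step1.trans step2
    have hn1 : (0:ℝ) < (n:ℝ) + 1 := by positivity
    have hp : Φ x ^ (n + 2) = Φ x ^ (n + 1) * Φ x := pow_succ _ _
    have hgoal : L = Φ x ^ (n + 2) / ((n:ℝ) + 2) := by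
      field_simp at hfin ⊢
      linarith [hfin]
    rw [hgoal]
    push_cast
    ring_nf

end jostPhi

lemma jost_k_bound (z : ℂ) (hzim : 0 ≤ z.im) (hz : z ≠ 0)
    (k : ℝ → ℂ)
    (hk : ∀ u : ℝ, k u = Complex.sin (u * z) / z * Complex.exp (Complex.I * u * z)) :
    ∀ u : ℝ, 0 ≤ u → ‖k u‖ ≤ min u (1 / ‖z‖) := by
  have hzabs : 0 < ‖z‖ := norm_pos_iff.mpr hz
  intro u hu
  have hexp1 : Complex.exp (-(↑u * z * Complex.I)) * Complex.exp (Complex.I * ↑u * z) = 1 := by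
    rw [← Complex.exp_add, show -(↑u * z * Complex.I) + Complex.I * ↑u * z = 0 by ring,
      Complex.exp_zero]
  have hexp2 : Complex.exp ((↑u * z) * Complex.I) * Complex.exp (Complex.I * ↑u * z)
      = Complex.exp (2 * Complex.I * ↑u * z) := by
    rw [← Complex.exp_add]
    congr 1
    ring
  have hid : k u * (2 * z) = (1 - Complex.exp (2 * Complex.I * ↑u * z)) * Complex.I := by
    have e : k u * (2 * z) = 2 * Complex.sin (↑u * z) * Complex.exp (Complex.I * ↑u * z) := by
      rw [hk, div_mul_eq_mul_div, div_mul_eq_mul_div, div_eq_iff hz]; ring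
    rw [e, Complex.sin, show -(↑u * z) * Complex.I = -(↑u * z * Complex.I) by ring]
    linear_combination Complex.I * hexp1 - Complex.I * hexp2
  have hre : (2 * Complex.I * ↑u * z).re ≤ 0 := by
    simp only [Complex.mul_re, Complex.mul_im, Complex.I_re, Complex.I_im, Complex.ofReal_re,
      Complex.ofReal_im, Complex.re_ofNat, Complex.im_ofNat]
    nlinarith [hu, hzim]
  set E := Complex.exp (2 * Complex.I * ↑u * z) with hE
  have habs : ‖2 * Complex.I * ↑u * z‖ = 2 * u * ‖z‖ := by
    rw [norm_mul, norm_mul, norm_mul]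
    simp [Complex.norm_I, Complex.norm_real, abs_of_nonneg hu]
  have hb1 : ‖E - 1‖ ≤ 2 * u * ‖z‖ := by
    rw [← habs]
    exact jost_aux_exp_bound _ hre
  have hb2 : ‖E - 1‖ ≤ 2 := by
    have h1 : ‖E‖ ≤ 1 := by
      rw [hE, Complex.norm_exp]
      simpa using Real.exp_le_exp.mpr hre
    calc ‖E - 1‖ ≤ ‖E‖ + ‖(1 : ℂ)‖ := by
          simpa using norm_sub_le E (1 : ℂ)
      _ ≤ 2 := by simp; linarith
  have hkabs : ‖k u‖ * (2 * ‖z‖) = ‖E - 1‖ := by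
    have := congrArg (fun x : ℂ => ‖x‖) hid
    rw [norm_mul, norm_mul] at this
    simpa [Complex.norm_I, norm_sub_rev] using this
  have h2z : 0 < 2 * ‖z‖ := by positivity
  apply le_min
  · have : ‖k u‖ * (2 * ‖z‖) ≤ u * (2 * ‖z‖) := by
      rw [hkabs]; linarith [hb1]
    exact le_of_mul_le_mul_right this h2z
  · have : ‖k u‖ * (2 * ‖z‖) ≤ (1 / ‖z‖) * (2 * ‖z‖) := by
      rw [hkabs]
      have : (1 / ‖z‖) * (2 * ‖z‖) = 2 := by field_simp
      rw [this]; exact hb2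
    exact le_of_mul_le_mul_right this h2z

set_option maxHeartbeats 2000000 in
/-- Existence and bound for the solution of the Jost integral equation on the half-line,
for a potential `q` integrable with weight `a`, where both `a` and `â(x) = x / a(x)` are
monotone increasing on `(0,∞)`.  There is a bounded continuous solution `f` of
`f(x) = g(x) + ∫ₓ^∞ k(t−x,z) q(t) f(t) dt` satisfying `|f(x)| ≤ exp(ω(x)) − 1`. -/
theorem jost_integral_equation_bound
    (a : ℝ → ℝ) (ha_pos : ∀ x : ℝ, 0 < x → 0 < a x)
    (ha_mono : ∀ x y : ℝ, 0 < x → x ≤ y → a x ≤ a y)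
    (hahat_mono : ∀ x y : ℝ, 0 < x → x ≤ y → x / a x ≤ y / a y)
    (q : ℝ → ℂ) (hq : IntegrableOn q (Set.Ici 0))
    (hqa : IntegrableOn (fun t => a t * ‖q t‖) (Set.Ici 0))
    (z : ℂ) (hzim : 0 ≤ z.im) (hz : z ≠ 0)
    (k : ℝ → ℂ)
    (hk : ∀ u : ℝ, k u = Complex.sin (u * z) / z * Complex.exp (Complex.I * u * z))
    (g : ℝ → ℂ) (hg : ∀ x : ℝ, g x = ∫ t in Set.Ici x, k (t - x) * q t)
    (ω : ℝ → ℝ)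
    (hω : ∀ x : ℝ, ω x =
      (1 / ‖z‖) / a (1 / ‖z‖) *
        ∫ t in Set.Ici x, a t * ‖q t‖) :
    ∃ f : ℝ → ℂ,
      ContinuousOn f (Set.Ici 0) ∧
      (∃ C : ℝ, ∀ x ∈ Set.Ici (0 : ℝ), ‖f x‖ ≤ C) ∧
      (∀ x ∈ Set.Ici (0 : ℝ), f x = g x + ∫ t in Set.Ici x, k (t - x) * q t * f t) ∧
      (∀ x ∈ Set.Ici (0 : ℝ), ‖f x‖ ≤ Real.exp (ω x) - 1) := by
  have hzabs : 0 < ‖z‖ := norm_pos_iff.mpr hz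
  set r : ℝ := 1 / ‖z‖ with hr
  have hrpos : 0 < r := by positivity
  have har : 0 < a r := ha_pos r hrpos
  set c : ℝ := r / a r with hc
  have hcpos : 0 < c := div_pos hrpos har
  have hk_cont : Continuous k := by
    have hkeq : k = fun u : ℝ => Complex.sin (u * z) / z * Complex.exp (Complex.I * u * z) :=
      funext hk
    rw [hkeq]
    exact ((Complex.continuous_sin.comp (by continuity)).div_const z).mul
      (Complex.continuous_exp.comp (by continuity))
  have hk0 : k 0 = 0 := by rw [hk]; simp
  have hkb : ∀ u : ℝ, 0 ≤ u → ‖k u‖ ≤ min u r := jost_k_bound z hzim hz k hk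
  -- the weight ρ
  set ρ : ℝ → ℝ := fun t => if 0 < t then c * (a t * ‖q t‖) else 0 with hρdef
  have hρ0 : ∀ t, 0 ≤ ρ t := by
    intro t
    by_cases h : 0 < t
    · simp only [hρdef, if_pos h]
      exact mul_nonneg hcpos.le (mul_nonneg (ha_pos t h).le (norm_nonneg _))
    · simp [hρdef, h]
  have hmem0 : ∀ᵐ t ∂(volume.restrict (Set.Ici (0:ℝ))), t ∈ Set.Ici (0:ℝ) :=
    ae_restrict_mem measurableSet_Ici
  have hnull : ∀ y : ℝ, ∀ᵐ t ∂(volume.restrict (Set.Ici (0:ℝ))), t ≠ y := by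
    intro y
    refine (MeasureTheory.ae_iff).mpr ?_
    have h1 : {t : ℝ | ¬ t ≠ y} = {y} := by ext t; simp
    rw [h1, Measure.restrict_apply (measurableSet_singleton y)]
    exact measure_mono_null Set.inter_subset_left (Real.volume_singleton)
  have hρae : (fun t => c * (a t * ‖q t‖))
      =ᵐ[volume.restrict (Set.Ici (0:ℝ))] ρ := by
    filter_upwards [hnull 0, hmem0] with t h1 h2
    have ht : 0 < t := lt_of_le_of_ne h2 (Ne.symm h1)
    simp [hρdef, ht]
  have hρint : IntegrableOn ρ (Set.Ici (0:ℝ)) := (hqa.const_mul c).congr hρae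
  have hρm : AEStronglyMeasurable ρ (volume.restrict (Set.Ici (0:ℝ))) :=
    hρint.aestronglyMeasurable
  -- measurable pointwise-nonnegative version w of ρ
  set w : ℝ → ℝ := Set.indicator (Set.Ici 0) (fun t => max (hρm.mk ρ t) 0) with hwdef
  have hwm : Measurable w :=
    ((hρm.stronglyMeasurable_mk.measurable).max measurable_const).indicator measurableSet_Ici
  have hw0 : ∀ t, 0 ≤ w t := by
    intro t
    rw [hwdef]
    by_cases h : t ∈ Set.Ici (0:ℝ)
    · rw [Set.indicator_of_mem h]; exact le_max_right _ _
    · rw [Set.indicator_of_notMem h]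
  have hweq' : ρ =ᵐ[volume.restrict (Set.Ici (0:ℝ))] (fun t => max (hρm.mk ρ t) 0) := by
    filter_upwards [hρm.ae_eq_mk] with t h1
    rw [← h1, max_eq_left (hρ0 t)]
  have hwint : Integrable w := by
    rw [hwdef, integrable_indicator_iff measurableSet_Ici]
    exact hρint.congr hweq'
  have hweq : ρ =ᵐ[volume.restrict (Set.Ici (0:ℝ))] w := by
    filter_upwards [hweq', hmem0] with t h1 h2
    rw [hwdef, Set.indicator_of_mem h2]
    exact h1
  have hweqx : ∀ x : ℝ, 0 ≤ x → ρ =ᵐ[volume.restrict (Set.Ici x)] w := fun x hx =>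
    ae_restrict_of_ae_restrict_of_subset (Set.Ici_subset_Ici.mpr hx) hweq
  -- Ω
  set Ω : ℝ → ℝ := jostPhi w with hΩdef
  have hΩ0 : ∀ t, 0 ≤ Ω t := jostPhi_nonneg hw0
  have hΩle : ∀ t, Ω t ≤ Ω 0 := jostPhi_le hw0 hwint
  have hkey : ∀ (n : ℕ) (x : ℝ), 0 ≤ x →
      ∫ t in Set.Ici x, w t * Ω t ^ n = Ω x ^ (n + 1) / (n + 1) :=
    jost_key hwm hw0 hwint
  have hωΩ : ∀ x : ℝ, 0 ≤ x → ω x = Ω x := by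
    intro x hx
    rw [hω x, hΩdef, jostPhi_eq x hx, ← integral_const_mul]
    exact integral_congr_ae
      (Filter.EventuallyEq.trans
        (ae_restrict_of_ae_restrict_of_subset (Set.Ici_subset_Ici.mpr hx) hρae)
        (hweqx x hx))
  -- core pointwise bound
  have hcore : ∀ x t : ℝ, 0 ≤ x → x ≤ t → ‖k (t - x) * q t‖ ≤ ρ t := by
    intro x t hx hxt
    rcases eq_or_lt_of_le hxt with h | h
    · have h0 : t - x = 0 := by rw [← h]; ring
      rw [h0, hk0, zero_mul, norm_zero]
      exact hρ0 t
    · have ht : 0 < t := lt_of_le_of_lt hx h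
      have hu : 0 < t - x := sub_pos.mpr h
      rw [norm_mul]
      have h1 : ‖k (t - x)‖ ≤ min (t - x) r := hkb _ hu.le
      have h2 : min (t - x) r ≤ c * a t := by
        rcases le_total (t - x) r with hle | hle
        · rw [min_eq_left hle]
          have hau : 0 < a (t - x) := ha_pos _ hu
          have e1 : (t - x) / a (t - x) ≤ c := by
            rw [hc]; exact hahat_mono _ _ hu hle
          have e2 : a (t - x) ≤ a t := ha_mono _ _ hu (by linarith)
          calc t - x = ((t - x) / a (t - x)) * a (t - x) := by field_simp
            _ ≤ c * a t := mul_le_mul e1 e2 hau.le hcpos.le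
        · rw [min_eq_right hle]
          have hre : r = c * a r := by rw [hc]; field_simp
          rw [hre]
          exact mul_le_mul_of_nonneg_left
            (ha_mono _ _ hrpos (le_trans hle (by linarith))) hcpos.le
      have hρt : ρ t = c * (a t * ‖q t‖) := by simp [hρdef, ht]
      rw [hρt, ← mul_assoc]
      exact mul_le_mul_of_nonneg_right (le_trans h1 h2) (norm_nonneg _)
  -- one Picard step
  have step : ∀ (h : ℝ → ℂ) (m : ℕ),
      AEStronglyMeasurable h (volume.restrict (Set.Ici (0:ℝ))) →
      (∀ t, 0 ≤ t → ‖h t‖ ≤ Ω t ^ m / (Nat.factorial m : ℝ)) →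
      (∀ x, 0 ≤ x → IntegrableOn (fun t => k (t - x) * q t * h t) (Set.Ici x)
          ∧ (∫ t in Set.Ici x, ‖k (t - x) * q t * h t‖)
              ≤ Ω x ^ (m + 1) / (Nat.factorial (m + 1) : ℝ))
        ∧ ContinuousOn (fun x => ∫ t in Set.Ici x, k (t - x) * q t * h t) (Set.Ici 0) := by
    intro h m hhm hhb
    set M : ℝ := Ω 0 ^ m / (Nat.factorial m : ℝ) with hMdef
    have hM0 : 0 ≤ M := div_nonneg (pow_nonneg (hΩ0 0) m) (Nat.cast_nonneg _)
    have hfact : (0:ℝ) < (Nat.factorial m : ℝ) := by positivity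
    have hhM : ∀ t, 0 ≤ t → ‖h t‖ ≤ M := by
      intro t ht
      refine le_trans (hhb t ht) ?_
      rw [hMdef]
      gcongr
      · exact hΩ0 t
      · exact hΩle t
    have hpt : ∀ x t : ℝ, 0 ≤ x → x ≤ t →
        ‖k (t - x) * q t * h t‖ ≤ ρ t * (Ω t ^ m / (Nat.factorial m : ℝ)) := by
      intro x t hx hxt
      have ht0 : (0:ℝ) ≤ t := le_trans hx hxt
      rw [norm_mul]
      exact mul_le_mul (hcore x t hx hxt) (hhb t ht0) (norm_nonneg _) (hρ0 t)
    have hptM : ∀ x t : ℝ, 0 ≤ x → x ≤ t →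
        ‖k (t - x) * q t * h t‖ ≤ ρ t * M := by
      intro x t hx hxt
      have ht0 : (0:ℝ) ≤ t := le_trans hx hxt
      rw [norm_mul]
      exact mul_le_mul (hcore x t hx hxt) (hhM t ht0) (norm_nonneg _) (hρ0 t)
    have hmeas : ∀ x : ℝ, 0 ≤ x → AEStronglyMeasurable (fun t => k (t - x) * q t * h t)
        (volume.restrict (Set.Ici x)) := by
      intro x hx
      have hres : volume.restrict (Set.Ici x) ≤ volume.restrict (Set.Ici (0:ℝ)) :=
        Measure.restrict_mono (Set.Ici_subset_Ici.mpr hx) le_rfl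
      exact (((hk_cont.comp (continuous_id.sub continuous_const)).aestronglyMeasurable).mul
        ((hq.mono_set (Set.Ici_subset_Ici.mpr hx)).aestronglyMeasurable)).mul
        (hhm.mono_measure hres)
    have hint : ∀ x : ℝ, 0 ≤ x → IntegrableOn (fun t => k (t - x) * q t * h t) (Set.Ici x) := by
      intro x hx
      apply Integrable.mono' (hwint.integrableOn.mul_const M) (hmeas x hx)
      filter_upwards [hweqx x hx, ae_restrict_mem measurableSet_Ici] with t h1 h2
      rw [← h1]
      exact hptM x t hx h2
    have hgint : ∀ x : ℝ, IntegrableOn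
        (fun t => w t * (Ω t ^ m / (Nat.factorial m : ℝ))) (Set.Ici x) := by
      intro x
      have h1 := (jostPhi_integrable_mul_pow hwm hw0 hwint m x).div_const (Nat.factorial m : ℝ)
      apply h1.congr
      refine Filter.Eventually.of_forall (fun t => ?_)
      simp only [mul_div_assoc]; rfl
    have hbnd : ∀ x : ℝ, 0 ≤ x → (∫ t in Set.Ici x, ‖k (t - x) * q t * h t‖)
        ≤ Ω x ^ (m + 1) / (Nat.factorial (m + 1) : ℝ) := by
      intro x hx
      have h1 : (∫ t in Set.Ici x, ‖k (t - x) * q t * h t‖)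
          ≤ ∫ t in Set.Ici x, w t * (Ω t ^ m / (Nat.factorial m : ℝ)) := by
        apply integral_mono_ae (hint x hx).norm (hgint x)
        filter_upwards [hweqx x hx, ae_restrict_mem measurableSet_Ici] with t h1 h2
        rw [← h1]
        exact hpt x t hx h2
      refine le_trans h1 (le_of_eq ?_)
      have h2 : ∫ t in Set.Ici x, w t * (Ω t ^ m / (Nat.factorial m : ℝ))
          = (∫ t in Set.Ici x, w t * Ω t ^ m) / (Nat.factorial m : ℝ) := by
        rw [← integral_div]
        exact integral_congr_ae (Filter.Eventually.of_forall fun t => (mul_div_assoc _ _ _).symm)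
      rw [h2, hkey m x hx, Nat.factorial_succ, Nat.cast_mul, Nat.cast_add, Nat.cast_one,
        div_div]
    have hcont : ContinuousOn (fun x => ∫ t in Set.Ici x, k (t - x) * q t * h t)
        (Set.Ici 0) := by
      have hcong : Set.EqOn (fun x => ∫ t in Set.Ici x, k (t - x) * q t * h t)
          (fun x => ∫ t in Set.Ici (0:ℝ),
            Set.indicator (Set.Ici x) (fun t => k (t - x) * q t * h t) t) (Set.Ici 0) := by
        intro x hx
        simp only
        rw [setIntegral_indicator measurableSet_Ici,
          Set.inter_eq_right.mpr (Set.Ici_subset_Ici.mpr hx)]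
      apply ContinuousOn.congr ?_ hcong
      intro x₀ hx₀
      have hx₀' : (0:ℝ) ≤ x₀ := hx₀
      unfold ContinuousWithinAt
      apply tendsto_integral_filter_of_dominated_convergence (fun t => w t * M)
      · filter_upwards [eventually_mem_nhdsWithin] with x hx
        exact ((((hk_cont.comp (continuous_id.sub continuous_const)).aestronglyMeasurable).mul
          (hq.aestronglyMeasurable)).mul hhm).indicator measurableSet_Ici
      · filter_upwards [eventually_mem_nhdsWithin] with x hx
        filter_upwards [hweq, hmem0] with t h1 h2
        by_cases hmem : t ∈ Set.Ici x
        · rw [Set.indicator_of_mem hmem, ← h1]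
          exact hptM x t hx hmem
        · rw [Set.indicator_of_notMem hmem, norm_zero]
          exact mul_nonneg (hw0 t) hM0
      · exact hwint.integrableOn.mul_const M
      · filter_upwards [hnull x₀] with t ht
        rcases lt_or_gt_of_ne ht with hlt | hgt
        · have hev : ∀ᶠ x in 𝓝[Set.Ici (0:ℝ)] x₀, t ∉ Set.Ici x := by
            refine Filter.Eventually.filter_mono nhdsWithin_le_nhds ?_
            filter_upwards [isOpen_Ioi.eventually_mem (Set.mem_Ioi.mpr hlt)] with x hx
            exact fun hmem => absurd (Set.mem_Ici.mp hmem) (not_le.mpr hx)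
          have hz0 : Set.indicator (Set.Ici x₀) (fun s => k (s - x₀) * q s * h s) t = 0 :=
            Set.indicator_of_notMem (fun hmem => absurd hmem (not_le.mpr hlt)) _
          rw [hz0]
          apply Filter.Tendsto.congr' ?_ tendsto_const_nhds
          filter_upwards [hev] with x hx
          exact (Set.indicator_of_notMem hx _).symm
        · have hev : ∀ᶠ x in 𝓝[Set.Ici (0:ℝ)] x₀, t ∈ Set.Ici x := by
            refine Filter.Eventually.filter_mono nhdsWithin_le_nhds ?_
            filter_upwards [isOpen_Iio.eventually_mem (Set.mem_Iio.mpr hgt)] with x hx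
            exact le_of_lt (Set.mem_Iio.mp hx)
          have hval : Set.indicator (Set.Ici x₀) (fun s => k (s - x₀) * q s * h s) t
              = k (t - x₀) * q t * h t :=
            Set.indicator_of_mem (le_of_lt hgt) _
          rw [hval]
          have htend : Filter.Tendsto (fun x : ℝ => k (t - x) * q t * h t)
              (𝓝[Set.Ici (0:ℝ)] x₀) (𝓝 (k (t - x₀) * q t * h t)) := by
            apply Filter.Tendsto.mono_left ?_ nhdsWithin_le_nhds
            exact (((hk_cont.comp (continuous_const.sub continuous_id)).tendsto x₀).mul
              tendsto_const_nhds).mul tendsto_const_nhds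
          apply Filter.Tendsto.congr' ?_ htend
          filter_upwards [hev] with x hx
          rw [Set.indicator_of_mem hx]
    exact ⟨fun x hx => ⟨hint x hx, hbnd x hx⟩, hcont⟩
  -- Picard iterates
  set G : ℕ → ℝ → ℂ := fun n => Nat.rec g
    (fun _ Gn => fun x => ∫ t in Set.Ici x, k (t - x) * q t * Gn t) n with hGdef
  have hGS : ∀ n : ℕ, G (n + 1) = fun x => ∫ t in Set.Ici x, k (t - x) * q t * G n t :=
    fun n => rfl
  have hone : ∀ t : ℝ, 0 ≤ t → ‖(fun _ : ℝ => (1:ℂ)) t‖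
      ≤ Ω t ^ 0 / (Nat.factorial 0 : ℝ) := by
    intro t ht
    simp
  have hstep1 := step (fun _ => (1:ℂ)) 0 aestronglyMeasurable_const hone
  have hgrepr : ∀ x : ℝ, g x = ∫ t in Set.Ici x, k (t - x) * q t * (fun _ : ℝ => (1:ℂ)) t := by
    intro x
    rw [hg x]
    simp only [mul_one]
  have claim : ∀ n : ℕ, ContinuousOn (G n) (Set.Ici 0)
      ∧ ∀ x : ℝ, 0 ≤ x → ‖G n x‖ ≤ Ω x ^ (n + 1) / (Nat.factorial (n + 1) : ℝ) := by
    intro n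
    induction n with
    | zero =>
      constructor
      · apply (hstep1.2).congr
        intro x hx
        exact hgrepr x
      · intro x hx
        rw [hGdef]
        calc ‖g x‖ = ‖∫ t in Set.Ici x, k (t - x) * q t * (fun _ : ℝ => (1:ℂ)) t‖ := by
              rw [hgrepr x]
          _ ≤ ∫ t in Set.Ici x, ‖k (t - x) * q t * (fun _ : ℝ => (1:ℂ)) t‖ :=
              norm_integral_le_integral_norm _
          _ ≤ Ω x ^ (0 + 1) / (Nat.factorial (0 + 1) : ℝ) := (hstep1.1 x hx).2
    | succ n ih =>
      have hstepn := step (G n) (n + 1) ((ih.1).aestronglyMeasurable measurableSet_Ici) ih.2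
      constructor
      · rw [hGS n]
        exact hstepn.2
      · intro x hx
        rw [hGS n]
        calc ‖∫ t in Set.Ici x, k (t - x) * q t * G n t‖
            ≤ ∫ t in Set.Ici x, ‖k (t - x) * q t * G n t‖ := norm_integral_le_integral_norm _
          _ ≤ Ω x ^ (n + 1 + 1) / (Nat.factorial (n + 1 + 1) : ℝ) := (hstepn.1 x hx).2
  have hstepn : ∀ n : ℕ, ∀ x : ℝ, 0 ≤ x →
      IntegrableOn (fun t => k (t - x) * q t * G n t) (Set.Ici x)
      ∧ (∫ t in Set.Ici x, ‖k (t - x) * q t * G n t‖)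
          ≤ Ω x ^ (n + 2) / (Nat.factorial (n + 2) : ℝ) := fun n x hx =>
    (step (G n) (n + 1) (((claim n).1).aestronglyMeasurable measurableSet_Ici) (claim n).2).1 x hx
  -- summability
  have hmono : ∀ (n : ℕ) (x : ℝ), 0 ≤ x →
      Ω x ^ n / (Nat.factorial n : ℝ) ≤ Ω 0 ^ n / (Nat.factorial n : ℝ) := by
    intro n x hx
    gcongr
    · exact hΩ0 x
    · exact hΩle x
  have hsumΩ : ∀ y : ℝ, Summable (fun n : ℕ => y ^ (n + 1) / (Nat.factorial (n + 1) : ℝ)) :=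
    fun y => (summable_nat_add_iff 1).mpr (Real.summable_pow_div_factorial y)
  have hGnorm : ∀ (n : ℕ) (x : ℝ), x ∈ Set.Ici (0:ℝ) →
      ‖G n x‖ ≤ Ω 0 ^ (n + 1) / (Nat.factorial (n + 1) : ℝ) := by
    intro n x hx
    exact le_trans ((claim n).2 x hx) (hmono (n + 1) x hx)
  set f : ℝ → ℂ := fun x => ∑' n : ℕ, G n x with hfdef
  have hsummable : ∀ x : ℝ, 0 ≤ x → Summable (fun n => G n x) := by
    intro x hx
    exact Summable.of_norm_bounded (hsumΩ (Ω 0)) (fun n => hGnorm n x hx)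
  have hfcont : ContinuousOn f (Set.Ici 0) := by
    rw [hfdef]
    exact continuousOn_tsum (fun n => (claim n).1) (hsumΩ (Ω 0)) hGnorm
  have hsumnorm : ∀ x : ℝ, 0 ≤ x → Summable (fun n => ‖G n x‖) := by
    intro x hx
    exact Summable.of_nonneg_of_le (fun n => norm_nonneg _) (fun n => hGnorm n x hx) (hsumΩ (Ω 0))
  have hfbound : ∀ x : ℝ, 0 ≤ x → ‖f x‖ ≤ Real.exp (Ω x) - 1 := by
    intro x hx
    rw [hfdef]
    calc ‖∑' n : ℕ, G n x‖ ≤ ∑' n : ℕ, ‖G n x‖ := norm_tsum_le_tsum_norm (hsumnorm x hx)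
      _ ≤ ∑' n : ℕ, Ω x ^ (n + 1) / (Nat.factorial (n + 1) : ℝ) := by
          apply Summable.tsum_le_tsum ?_ (hsumnorm x hx) (hsumΩ (Ω x))
          intro n
          exact (claim n).2 x hx
      _ = Real.exp (Ω x) - 1 := jost_aux_tsum_exp (Ω x)
  -- the integral equation
  have heq : ∀ x : ℝ, 0 ≤ x → f x = g x + ∫ t in Set.Ici x, k (t - x) * q t * f t := by
    intro x hx
    have h0 : f x = G 0 x + ∑' n : ℕ, G (n + 1) x := Summable.tsum_eq_zero_add (hsummable x hx)
    have hFsum : Summable (fun n : ℕ => ∫ t in Set.Ici x, ‖k (t - x) * q t * G n t‖) := by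
      apply Summable.of_nonneg_of_le
        (fun n => integral_nonneg (fun t => norm_nonneg _))
        (fun n => le_trans ((hstepn n x hx).2) (hmono (n + 2) x hx))
      exact (summable_nat_add_iff 2).mpr (Real.summable_pow_div_factorial (Ω 0))
    have hswap : ∑' n : ℕ, G (n + 1) x = ∫ t in Set.Ici x, k (t - x) * q t * f t := by
      calc ∑' n : ℕ, G (n + 1) x
          = ∑' n : ℕ, ∫ t in Set.Ici x, k (t - x) * q t * G n t := by
            apply tsum_congr
            intro n
            rw [hGS n]
        _ = ∫ t in Set.Ici x, ∑' n : ℕ, k (t - x) * q t * G n t :=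
            integral_tsum_of_summable_integral_norm (fun n => (hstepn n x hx).1) hFsum
        _ = ∫ t in Set.Ici x, k (t - x) * q t * f t := by
            apply integral_congr_ae
            refine Filter.Eventually.of_forall (fun t => ?_)
            rw [hfdef]
            exact tsum_mul_left
    rw [h0, hswap]
    rfl
  refine ⟨f, hfcont, ⟨Real.exp (Ω 0) - 1, ?_⟩, ?_, ?_⟩
  · intro x hx
    refine le_trans (hfbound x hx) ?_
    have := Real.exp_le_exp.mpr (hΩle x)
    linarith
  · intro x hx
    exact heq x hx
  · intro x hx
    rw [hωΩ x hx]
    exact hfbound x hx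
end

section
/- For every complex number z with Im z > 0, setting w = (z−i)/(z+i) (so that |w| < 1), one has (Im z)/(1+|z|²) ≤ 1 − |w| ≤ 8·(Im z)/(1+|z|²). -/
/-- For `Im z > 0`, with `w = (z−i)/(z+i)` (so `|w| < 1`):
`Im z/(1+|z|²) ≤ 1 − |w| ≤ 8·Im z/(1+|z|²)`. -/
theorem one_sub_abs_cayley_bounds (z : ℂ) (hz : 0 < z.im) :
    z.im / (1 + ‖z‖ ^ 2) ≤ 1 - ‖(z - Complex.I) / (z + Complex.I)‖ ∧
    1 - ‖(z - Complex.I) / (z + Complex.I)‖ ≤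
      8 * z.im / (1 + ‖z‖ ^ 2) := by
  set x := z.re with hx
  set y := z.im with hy
  have hzI : z + Complex.I ≠ 0 := by
    intro h
    have := congrArg Complex.im h
    simp at this
    linarith
  set a := ‖z - Complex.I‖ with ha
  set b := ‖z + Complex.I‖ with hb
  have hb0 : 0 < b := by
    rw [hb]
    exact norm_pos_iff.mpr hzI
  have ha0 : 0 ≤ a := norm_nonneg _
  have ha2 : a ^ 2 = x ^ 2 + (y - 1) ^ 2 := by
    rw [ha, Complex.sq_norm, Complex.normSq_apply]
    simp [hx, hy]
    ring
  have hb2 : b ^ 2 = x ^ 2 + (y + 1) ^ 2 := by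
    rw [hb, Complex.sq_norm, Complex.normSq_apply]
    simp [hx, hy]
    ring
  have hs : ‖z‖ ^ 2 = x ^ 2 + y ^ 2 := by
    rw [Complex.sq_norm, Complex.normSq_apply, ← hx, ← hy]
    ring
  have habs : ‖(z - Complex.I) / (z + Complex.I)‖ = a / b := by
    rw [norm_div]
  have hab : a ≤ b := by nlinarith
  have hpos : (0 : ℝ) < 1 + (x ^ 2 + y ^ 2) := by positivity
  have hden : (0 : ℝ) < b * (a + b) := by nlinarith
  have key : 1 - a / b = 4 * y / (b * (a + b)) := by
    have hba : (b - a) * (b + a) = 4 * y := by nlinarith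
    field_simp
    nlinarith
  rw [habs, hs, key]
  have h1 : b * (a + b) ≤ 4 * (1 + (x ^ 2 + y ^ 2)) := by
    nlinarith [mul_le_mul_of_nonneg_left hab hb0.le, sq_nonneg (y - 1)]
  have h2 : 1 + (x ^ 2 + y ^ 2) ≤ 2 * (b * (a + b)) := by
    nlinarith [mul_nonneg hb0.le ha0]
  constructor
  · rw [div_le_div_iff₀ hpos hden]
    linarith [mul_le_mul_of_nonneg_left h1 hz.le]
  · rw [div_le_div_iff₀ hden hpos]
    linarith [mul_le_mul_of_nonneg_left h2 hz.le]
end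

section
/- Let θ be a real number with −π < θ < π. Then the maximum over r ∈ [0,1] of |(1 − r·e^{iθ})/(1 + r·e^{iθ})| equals 1 if |θ| ≤ π/2, and equals |tan(θ/2)| if π/2 < |θ| < π. -/
open Real

private lemma abs_sq_aux (r θ : ℝ) :
    ‖1 - (r : ℂ) * Complex.exp (θ * Complex.I)‖ ^ 2
      = 1 - 2 * r * Real.cos θ + r ^ 2 ∧
    ‖1 + (r : ℂ) * Complex.exp (θ * Complex.I)‖ ^ 2
      = 1 + 2 * r * Real.cos θ + r ^ 2 := by
  have h := Real.sin_sq_add_cos_sq θ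
  constructor <;>
  · rw [Complex.sq_norm, Complex.normSq_apply]
    simp [Complex.exp_ofReal_mul_I_re, Complex.exp_ofReal_mul_I_im]
    ring_nf
    nlinarith [h]

/-- For `−π < θ < π`, the maximum over `r ∈ [0,1]` of `|(1 − r·e^{iθ})/(1 + r·e^{iθ})|`
equals `1` if `|θ| ≤ π/2`, and equals `|tan(θ/2)|` if `π/2 < |θ| < π`. -/
theorem max_abs_mobius_on_radius (θ : ℝ) (hθ₁ : -π < θ) (hθ₂ : θ < π) :
    (|θ| ≤ π / 2 →
      IsGreatest ((fun r : ℝ =>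
        ‖((1 - (r : ℂ) * Complex.exp (θ * Complex.I)) /
          (1 + (r : ℂ) * Complex.exp (θ * Complex.I)))‖) '' Set.Icc 0 1) 1) ∧
    (π / 2 < |θ| →
      IsGreatest ((fun r : ℝ =>
        ‖((1 - (r : ℂ) * Complex.exp (θ * Complex.I)) /
          (1 + (r : ℂ) * Complex.exp (θ * Complex.I)))‖) '' Set.Icc 0 1)
        |Real.tan (θ / 2)|) := by
  set c := Real.cos θ with hc
  -- cos (θ/2) > 0
  have hcoshalf : 0 < Real.cos (θ / 2) :=
    Real.cos_pos_of_mem_Ioo ⟨by linarith, by linarith⟩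
  have hcsq : Real.cos (θ / 2) ^ 2 = (1 + c) / 2 := by
    have := Real.cos_sq (θ / 2)
    rw [this]; rw [hc]; ring_nf
  have hssq : Real.sin (θ / 2) ^ 2 = (1 - c) / 2 := by
    have := Real.sin_sq_add_cos_sq (θ / 2)
    nlinarith [hcsq]
  have h1c : 0 < 1 + c := by nlinarith [hcoshalf]
  -- denominator positivity
  have hD : ∀ r : ℝ, r ∈ Set.Icc (0:ℝ) 1 → 0 < 1 + 2 * r * c + r ^ 2 := by
    intro r hr
    have hc1 : -1 < c := by linarith
    have hc2 : c ≤ 1 := Real.cos_le_one θ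
    nlinarith [hr.1, hr.2, sq_nonneg (1 - r), sq_nonneg (1 + r)]
  have habs : ∀ r : ℝ, r ∈ Set.Icc (0:ℝ) 1 →
      ‖((1 - (r : ℂ) * Complex.exp (θ * Complex.I)) /
          (1 + (r : ℂ) * Complex.exp (θ * Complex.I)))‖ ^ 2
        = (1 - 2 * r * c + r ^ 2) / (1 + 2 * r * c + r ^ 2) := by
    intro r hr
    rw [norm_div, div_pow, (abs_sq_aux r θ).1, (abs_sq_aux r θ).2]
  have hnn : ∀ r : ℝ, 0 ≤ ‖((1 - (r : ℂ) * Complex.exp (θ * Complex.I)) /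
          (1 + (r : ℂ) * Complex.exp (θ * Complex.I)))‖ := fun r => norm_nonneg _
  constructor
  · intro hθ
    have hcnn : 0 ≤ c := by
      rw [abs_le] at hθ
      exact Real.cos_nonneg_of_mem_Icc ⟨by linarith [hθ.1], hθ.2⟩
    constructor
    · exact ⟨0, ⟨le_refl 0, zero_le_one⟩, by norm_num⟩
    · rintro x ⟨r, hr, rfl⟩
      have h2 := habs r hr
      have hDr := hD r hr
      have hsq : ‖((1 - (r : ℂ) * Complex.exp (θ * Complex.I)) /
          (1 + (r : ℂ) * Complex.exp (θ * Complex.I)))‖ ^ 2 ≤ 1 ^ 2 := by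
        rw [h2, one_pow, div_le_one hDr]
        nlinarith [hr.1]
      exact (pow_le_pow_iff_left₀ (hnn r) zero_le_one (by norm_num)).mp hsq
  · intro hθ
    have hcneg : c ≤ 0 := by
      rcases abs_cases θ with ⟨h, _⟩ | ⟨h, _⟩
      · exact le_of_lt (Real.cos_neg_of_pi_div_two_lt_of_lt (h ▸ hθ) (by linarith [Real.pi_pos]))
      · have : Real.cos (-θ) ≤ 0 := le_of_lt
          (Real.cos_neg_of_pi_div_two_lt_of_lt (h ▸ hθ) (by linarith [Real.pi_pos]))
        rwa [Real.cos_neg] at this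
    have htansq : |Real.tan (θ / 2)| ^ 2 = (1 - c) / (1 + c) := by
      rw [sq_abs, Real.tan_eq_sin_div_cos, div_pow, hssq, hcsq]
      field_simp
    have htannn : 0 ≤ |Real.tan (θ / 2)| := abs_nonneg _
    constructor
    · refine ⟨1, ⟨zero_le_one, le_refl 1⟩, ?_⟩
      have h2 := habs 1 ⟨zero_le_one, le_refl 1⟩
      refine (sq_eq_sq₀ (hnn 1) htannn).mp ?_
      rw [h2, htansq]
      have hD1 : (0:ℝ) < 1 + 2 * 1 * c + 1 ^ 2 := hD 1 ⟨zero_le_one, le_refl 1⟩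
      rw [div_eq_div_iff hD1.ne' h1c.ne']
      ring
    · rintro x ⟨r, hr, rfl⟩
      have h2 := habs r hr
      have hDr := hD r hr
      have hsq : ‖((1 - (r : ℂ) * Complex.exp (θ * Complex.I)) /
          (1 + (r : ℂ) * Complex.exp (θ * Complex.I)))‖ ^ 2 ≤ |Real.tan (θ / 2)| ^ 2 := by
        rw [h2, htansq, div_le_div_iff₀ hDr h1c]
        nlinarith [sq_nonneg (1 - r), hr.1, hr.2]
      exact (pow_le_pow_iff_left₀ (hnn r) htannn (by norm_num)).mp hsq
end

section
/- Let α be a real number with 1 < α ≤ 2 and let a : (0,∞) → (0,∞) be monotone increasing with ∫_e^∞ a(x)/(x·(log x)^α) dx < ∞. Then ∫_1^∞ dt/(t·a(t)) = ∞. -/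
open MeasureTheory

private lemma one_lt_exp_one : (1 : ℝ) < Real.exp 1 := by
  have := Real.add_one_le_exp (1 : ℝ)
  linarith

private lemma logd {x : ℝ} (hx : Real.exp 1 ≤ x) :
    HasDerivAt (fun y => Real.log (Real.log y)) (1 / (x * Real.log x)) x := by
  have hx0 : (0 : ℝ) < x := lt_of_lt_of_le (Real.exp_pos 1) hx
  have hlx : (1 : ℝ) ≤ Real.log x := by
    have := Real.log_le_log (Real.exp_pos 1) hx
    rwa [Real.log_exp] at this
  have h1 : HasDerivAt Real.log (1 / x) x := by
    simpa [one_div] using Real.hasDerivAt_log hx0.ne'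
  have h2 : HasDerivAt Real.log (1 / Real.log x) (Real.log x) := by
    simpa [one_div] using Real.hasDerivAt_log (by linarith : Real.log x ≠ 0)
  have := h2.comp x h1
  convert this using 1
  have hL0 : Real.log x ≠ 0 := by linarith
  rotate_right
  · rw [one_div_mul_one_div]
    ring
  all_goals rfl

private lemma logint_top :
    ∫⁻ x in Set.Ici (Real.exp 1), ENNReal.ofReal (1 / (x * Real.log x)) = ⊤ := by
  by_contra h
  set I := ∫⁻ x in Set.Ici (Real.exp 1), ENNReal.ofReal (1 / (x * Real.log x)) with hI
  set C := I.toReal with hC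
  have key : ∀ T : ℝ, Real.exp 1 ≤ T → Real.log (Real.log T) ≤ C := by
    intro T hT
    have hcont : ContinuousOn (fun x => 1 / (x * Real.log x)) (Set.uIcc (Real.exp 1) T) := by
      rw [Set.uIcc_of_le hT]
      intro x hx
      have hx0 : (0 : ℝ) < x := lt_of_lt_of_le (Real.exp_pos 1) hx.1
      have hlx : (1 : ℝ) ≤ Real.log x := by
        have := Real.log_le_log (Real.exp_pos 1) hx.1
        rwa [Real.log_exp] at this
      have hne : x * Real.log x ≠ 0 := by positivity
      exact (continuousAt_const.div
        ((continuous_id.continuousAt).mul (Real.continuousAt_log hx0.ne')) hne).continuousWithinAt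
    have hint : IntervalIntegrable (fun x => 1 / (x * Real.log x)) volume (Real.exp 1) T :=
      hcont.intervalIntegrable
    have heval : ∫ x in (Real.exp 1)..T, 1 / (x * Real.log x) = Real.log (Real.log T) := by
      have := intervalIntegral.integral_eq_sub_of_hasDerivAt
        (f := fun y => Real.log (Real.log y)) (f' := fun x => 1 / (x * Real.log x))
        (a := Real.exp 1) (b := T)
        (fun x hx => by
          rw [Set.uIcc_of_le hT] at hx
          exact logd hx.1) hint
      rw [this]; simp [Real.log_exp]
    have hio : ∫ x in (Real.exp 1)..T, 1 / (x * Real.log x)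
        = ∫ x in Set.Ioc (Real.exp 1) T, 1 / (x * Real.log x) := by
      rw [intervalIntegral.integral_of_le hT]
    have hintIoc : IntegrableOn (fun x => 1 / (x * Real.log x)) (Set.Ioc (Real.exp 1) T) :=
      (intervalIntegrable_iff_integrableOn_Ioc_of_le hT).mp hint
    have hpos_ae : ∀ᵐ x ∂(volume.restrict (Set.Ioc (Real.exp 1) T)),
        0 ≤ 1 / (x * Real.log x) := by
      refine (ae_restrict_iff' measurableSet_Ioc).2 (ae_of_all _ ?_)
      intro x hx
      have hx0 : (0 : ℝ) < x := lt_trans (Real.exp_pos 1) hx.1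
      have hl0 : (0 : ℝ) < Real.log x := Real.log_pos (lt_trans one_lt_exp_one hx.1)
      positivity
    have heq := integral_eq_lintegral_of_nonneg_ae hpos_ae hintIoc.aestronglyMeasurable
    have h2 : ∫⁻ x in Set.Ioc (Real.exp 1) T, ENNReal.ofReal (1 / (x * Real.log x)) ≤ I := by
      rw [hI]
      exact lintegral_mono' (Measure.restrict_mono (fun x hx => hx.1.le) le_rfl) le_rfl
    calc Real.log (Real.log T)
        = ∫ x in Set.Ioc (Real.exp 1) T, 1 / (x * Real.log x) := by rw [← heval, hio]
      _ = (∫⁻ x in Set.Ioc (Real.exp 1) T, ENNReal.ofReal (1 / (x * Real.log x))).toReal := heq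
      _ ≤ C := ENNReal.toReal_mono h h2
  -- contradiction
  have hC0 : 0 ≤ C := ENNReal.toReal_nonneg
  have hT : Real.exp 1 ≤ Real.exp (Real.exp (C + 1)) := by
    apply Real.exp_le_exp.mpr
    have : (0 : ℝ) ≤ C + 1 := by linarith
    calc (1 : ℝ) ≤ C + 1 + 1 := by linarith
      _ ≤ Real.exp (C + 1) := by
          have := Real.add_one_le_exp (C + 1); linarith
  have := key _ hT
  rw [Real.log_exp, Real.log_exp] at this
  linarith

/-- If `1 < α ≤ 2` and `a` is positive and monotone increasing on `(0,∞)` with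
`∫_e^∞ a(x)/(x (log x)^α) dx < ∞`, then `∫_1^∞ dt/(t·a(t)) = ∞`. -/
theorem no_admissible_weight (α : ℝ) (hα₁ : 1 < α) (hα₂ : α ≤ 2) (a : ℝ → ℝ)
    (ha_pos : ∀ x : ℝ, 0 < x → 0 < a x)
    (ha_mono : ∀ x y : ℝ, 0 < x → x ≤ y → a x ≤ a y)
    (hfin : ∫⁻ x in Set.Ici (Real.exp 1),
      ENNReal.ofReal (a x / (x * Real.log x ^ α)) < ⊤) :
    ∫⁻ t in Set.Ioi (1 : ℝ), ENNReal.ofReal (1 / (t * a t)) = ⊤ := by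
  by_contra hcon
  have hIlt : ∫⁻ t in Set.Ioi (1 : ℝ), ENNReal.ofReal (1 / (t * a t)) < ⊤ :=
    lt_top_iff_ne_top.mpr hcon
  set b : ℝ → ℝ := fun x => a (max x 1) with hb
  have hbmono : Monotone b := fun x y hxy =>
    ha_mono _ _ (lt_of_lt_of_le one_pos (le_max_right x 1)) (max_le_max hxy le_rfl)
  have hbmeas : Measurable b := hbmono.measurable
  have hbpos : ∀ x, 0 < b x := fun x => ha_pos _ (lt_of_lt_of_le one_pos (le_max_right x 1))
  have hbe : ∀ x ∈ Set.Ici (Real.exp 1), b x = a x := by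
    intro x hx
    have h1 : (1 : ℝ) ≤ x := le_trans one_lt_exp_one.le hx
    rw [hb]; simp [max_eq_left h1]
  have hsub : Set.Ici (Real.exp 1) ⊆ Set.Ioi (1 : ℝ) :=
    fun x hx => lt_of_lt_of_le one_lt_exp_one hx
  have hg : ∫⁻ x in Set.Ici (Real.exp 1),
      ENNReal.ofReal (b x / (x * Real.log x ^ α)) < ⊤ := by
    have := setLIntegral_congr_fun (μ := volume) (f := fun x => ENNReal.ofReal (b x / (x * Real.log x ^ α)))
      (g := fun x => ENNReal.ofReal (a x / (x * Real.log x ^ α)))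
      measurableSet_Ici (fun x (hx : x ∈ Set.Ici (Real.exp 1)) => by simp only [hbe x hx])
    rw [this]; exact hfin
  have hf : ∫⁻ x in Set.Ici (Real.exp 1), ENNReal.ofReal (1 / (x * b x)) < ⊤ := by
    have hcg := setLIntegral_congr_fun (μ := volume) (f := fun x => ENNReal.ofReal (1 / (x * b x)))
      (g := fun x => ENNReal.ofReal (1 / (x * a x)))
      measurableSet_Ici (fun x (hx : x ∈ Set.Ici (Real.exp 1)) => by simp only [hbe x hx])
    rw [hcg]
    exact lt_of_le_of_lt
      (lintegral_mono' (Measure.restrict_mono hsub le_rfl) le_rfl) hIlt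
  have hpt : ∀ x ∈ Set.Ici (Real.exp 1),
      ENNReal.ofReal (1 / (x * Real.log x))
        ≤ ENNReal.ofReal (1 / (x * b x)) + ENNReal.ofReal (b x / (x * Real.log x ^ α)) := by
    intro x hx
    have hx0 : (0 : ℝ) < x := lt_of_lt_of_le (Real.exp_pos 1) hx
    have hlx : (1 : ℝ) ≤ Real.log x := by
      have := Real.log_le_log (Real.exp_pos 1) hx
      rwa [Real.log_exp] at this
    have hL0 : (0 : ℝ) < Real.log x := by linarith
    have hA0 : (0 : ℝ) < b x := hbpos x
    have hLα : (0 : ℝ) < Real.log x ^ α := Real.rpow_pos_of_pos hL0 α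
    have hreal : 1 / (x * Real.log x) ≤ 1 / (x * b x) + b x / (x * Real.log x ^ α) := by
      rcases le_total (b x) (Real.log x) with hcase | hcase
      · have h1 : 1 / (x * Real.log x) ≤ 1 / (x * b x) := by
          apply one_div_le_one_div_of_le (by positivity)
          exact mul_le_mul_of_nonneg_left hcase hx0.le
        have h2 : (0 : ℝ) ≤ b x / (x * Real.log x ^ α) := by positivity
        linarith
      · have hsplit : Real.log x ^ α = Real.log x ^ (α - 1) * Real.log x := by
          rw [← Real.rpow_add_one hL0.ne' (α - 1)]
          norm_num
        have hle1 : Real.log x ^ (α - 1) ≤ Real.log x := by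
          calc Real.log x ^ (α - 1) ≤ Real.log x ^ (1 : ℝ) :=
                Real.rpow_le_rpow_of_exponent_le hlx (by linarith)
            _ = Real.log x := Real.rpow_one _
        have h1 : 1 / (x * Real.log x) ≤ b x / (x * Real.log x ^ α) := by
          rw [div_le_div_iff₀ (by positivity) (by positivity)]
          calc 1 * (x * Real.log x ^ α) = x * (Real.log x ^ (α - 1) * Real.log x) := by
                rw [hsplit]; ring
            _ ≤ x * (b x * Real.log x) := by
                apply mul_le_mul_of_nonneg_left _ hx0.le
                apply mul_le_mul_of_nonneg_right _ hL0.le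
                exact le_trans hle1 hcase
            _ = b x * (x * Real.log x) := by ring
        have h2 : (0 : ℝ) ≤ 1 / (x * b x) := by positivity
        linarith
    calc ENNReal.ofReal (1 / (x * Real.log x))
        ≤ ENNReal.ofReal (1 / (x * b x) + b x / (x * Real.log x ^ α)) :=
          ENNReal.ofReal_le_ofReal hreal
      _ = ENNReal.ofReal (1 / (x * b x)) + ENNReal.ofReal (b x / (x * Real.log x ^ α)) :=
          ENNReal.ofReal_add (by positivity) (by positivity)
  have hmeasf : Measurable fun x => ENNReal.ofReal (1 / (x * b x)) :=
    (measurable_const.div (measurable_id.mul hbmeas)).ennreal_ofReal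
  have hle : ∫⁻ x in Set.Ici (Real.exp 1), ENNReal.ofReal (1 / (x * Real.log x))
      ≤ (∫⁻ x in Set.Ici (Real.exp 1), ENNReal.ofReal (1 / (x * b x)))
        + ∫⁻ x in Set.Ici (Real.exp 1), ENNReal.ofReal (b x / (x * Real.log x ^ α)) := by
    rw [← lintegral_add_left hmeasf]
    exact lintegral_mono_ae ((ae_restrict_iff' measurableSet_Ici).2 (ae_of_all _ hpt))
  rw [logint_top] at hle
  exact absurd (top_le_iff.mp hle) (ENNReal.add_lt_top.mpr ⟨hf, hg⟩).ne
end

section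
/- Let γ > 0 and let w ∈ F_∞, and let z denote the principal square root of w² + iγ. Then |z − w| ≥ |z + w|. -/
/-- The closed sector `F_∞ = {w : Re w ≤ 0 ≤ Im w, |Re w| ≥ 2·Im w}`. -/
def Finf : Set ℂ := {w : ℂ | w.re ≤ 0 ∧ 0 ≤ w.im ∧ 2 * w.im ≤ |w.re|}

/-- For `γ > 0`, `w ∈ F_∞` and `z` the principal square root of `w² + iγ`,
one has `|z − w| ≥ |z + w|`. -/
theorem sector_sqrt_abs_sub_ge_abs_add (γ : ℝ) (hγ : 0 < γ) (w : ℂ) (hw : w ∈ Finf) :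
    ‖(w ^ 2 + Complex.I * γ) ^ ((1 : ℂ) / 2) + w‖ ≤
      ‖(w ^ 2 + Complex.I * γ) ^ ((1 : ℂ) / 2) - w‖ := by
  obtain ⟨hre, him, hsec⟩ := hw
  rw [abs_of_nonpos hre] at hsec
  set u : ℂ := w ^ 2 + Complex.I * γ with hu
  set z : ℂ := u ^ ((1 : ℂ) / 2) with hz
  have h12 : (1 : ℂ) / 2 = ((2 : ℕ) : ℂ)⁻¹ := by norm_num
  have hz2 : z ^ 2 = u := by
    rw [hz, h12]; exact Complex.cpow_nat_inv_pow u two_ne_zero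
  have hxa : 0 ≤ z.re := by
    rw [hz, show (1 : ℂ) / 2 = (2⁻¹ : ℂ) by norm_num, Complex.cpow_inv_two_re]
    exact Real.sqrt_nonneg _
  have hure : 0 ≤ u.re := by
    have : u.re = w.re ^ 2 - w.im ^ 2 := by
      simp [hu, Complex.add_re, Complex.mul_re, pow_two]
    nlinarith
  have hz2re : (z ^ 2).re = z.re ^ 2 - z.im ^ 2 := by
    simp [pow_two, Complex.mul_re]
  have hkey : z.im ^ 2 ≤ z.re ^ 2 := by
    have := hz2 ▸ hz2re; nlinarith
  have habs : |z.im| ≤ z.re := by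
    rw [abs_le]; constructor <;> nlinarith [abs_nonneg z.im, sq_abs z.im]
  have h1 : z.im ≤ z.re := le_trans (le_abs_self _) habs
  have h2 : -z.re ≤ z.im := by have := neg_abs_le z.im; linarith
  have habs2 : (‖z + w‖) ^ 2 ≤ (‖z - w‖) ^ 2 := by
    rw [Complex.sq_norm, Complex.sq_norm, Complex.normSq_apply, Complex.normSq_apply]
    simp only [Complex.add_re, Complex.add_im, Complex.sub_re, Complex.sub_im]
    nlinarith [mul_nonneg hxa him]
  nlinarith [norm_nonneg (z + w), norm_nonneg (z - w)]
end

section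
/- For every γ > 0 and every w ∈ F_∞, one has |w² + iγ| ≥ (3/5)·γ; in particular |w² + iγ| > γ/2. -/
/-- For every `γ > 0` and `w ∈ F_∞`: `|w² + iγ| ≥ (3/5)·γ`, in particular
`|w² + iγ| > γ/2`. -/
theorem sector_abs_sq_add_I_gamma (γ : ℝ) (hγ : 0 < γ) (w : ℂ) (hw : w ∈ Finf) :
    (3 / 5) * γ ≤ ‖w ^ 2 + Complex.I * γ‖ ∧
    γ / 2 < ‖w ^ 2 + Complex.I * γ‖ := by
  obtain ⟨hx, hy, hxy⟩ := hw
  rw [abs_of_nonpos hx] at hxy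
  set x := w.re with hxdef
  set y := w.im with hydef
  set z := w ^ 2 + Complex.I * γ with hz
  have hre : z.re = x ^ 2 - y ^ 2 := by
    simp [hz, pow_two, Complex.mul_re, Complex.mul_im]
    rfl
  have him : z.im = 2 * x * y + γ := by
    simp [hz, pow_two, Complex.mul_re, Complex.mul_im]
    ring
  have hsq : ‖z‖ ^ 2 = (x ^ 2 - y ^ 2) ^ 2 + (2 * x * y + γ) ^ 2 := by
    rw [Complex.sq_norm, Complex.normSq_apply, hre, him]; ring
  have habs : 0 ≤ ‖z‖ := norm_nonneg z
  have ht : 0 ≤ -2 * x * y := by nlinarith [mul_nonneg (neg_nonneg.mpr hx) hy]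
  have hAx : 4 * y ^ 2 ≤ x ^ 2 := by nlinarith
  have hB : -2 * x * y ≤ x ^ 2 := by
    nlinarith [mul_nonneg (neg_nonneg.mpr hx) (by linarith : 0 ≤ -(x + 2 * y))]
  have ha34 : 3 / 4 * (-2 * x * y) ≤ x ^ 2 - y ^ 2 := by linarith
  have hasq : (3 / 4 * (-2 * x * y)) ^ 2 ≤ (x ^ 2 - y ^ 2) ^ 2 :=
    pow_le_pow_left₀ (by linarith) ha34 2
  have key : (3 / 5 * γ) ^ 2 ≤ ‖z‖ ^ 2 := by
    rw [hsq]
    nlinarith [sq_nonneg (25 * (-2 * x * y) - 16 * γ), hasq]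
  have h1 : 3 / 5 * γ ≤ ‖z‖ := by
    nlinarith [key, habs, hγ]
  exact ⟨h1, lt_of_lt_of_le (by linarith) h1⟩
end
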